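/- arXiv:1804.04951 — 2 statements merged into one kernel-verified Lean document; each statement's English description precedes it below -/
import Mathlib

section
/- Let V be a finite-dimensional real vector space, F ⊆ V a subspace, and ω a skew-symmetric bilinear form on F. Then D_{F,ω} = {(u,α) ∈ V ⊕ V* : u ∈ F and α(v) = ω(u,v) for all v ∈ F} is a linear Dirac structure on V; moreover its projection onto V equals F and the induced form ω_{D_{F,ω}} equals ω. -/
open Module

def pairLR {V : Type*} [AddCommGroup V] [Module ℝ V]
    (x y : V × Module.Dual ℝ V) : ℝ := x.2 y.1 + y.2 x.1

def orthSet {V : Type*} [AddCommGroup V] [Module ℝ V]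
    (D : Submodule ℝ (V × Module.Dual ℝ V)) : Set (V × Module.Dual ℝ V) :=
  {x | ∀ y ∈ D, pairLR x y = 0}

def IsDirac {V : Type*} [AddCommGroup V] [Module ℝ V]
    (D : Submodule ℝ (V × Module.Dual ℝ V)) : Prop :=
  (D : Set (V × Module.Dual ℝ V)) = orthSet D

def diracOfForm {V : Type*} [AddCommGroup V] [Module ℝ V] (F : Submodule ℝ V)
    (ω : F →ₗ[ℝ] F →ₗ[ℝ] ℝ) : Submodule ℝ (V × Module.Dual ℝ V) where
  carrier := {p | ∃ h : p.1 ∈ F, ∀ v : F, p.2 v = ω ⟨p.1, h⟩ v}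
  zero_mem' := ⟨F.zero_mem, fun v => by
    have h : (⟨(0 : V × Module.Dual ℝ V).1, F.zero_mem⟩ : F) = 0 := rfl
    rw [h, map_zero]
    simp⟩
  add_mem' := by
    rintro a b ⟨ha, Ha⟩ ⟨hb, Hb⟩
    refine ⟨F.add_mem ha hb, fun v => ?_⟩
    have h : (⟨(a + b).1, F.add_mem ha hb⟩ : F) = ⟨a.1, ha⟩ + ⟨b.1, hb⟩ := rfl
    have h2 : (a + b).2 v = a.2 v + b.2 v := rfl
    rw [h2, h, map_add, LinearMap.add_apply, Ha v, Hb v]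
  smul_mem' := by
    rintro c a ⟨ha, Ha⟩
    refine ⟨F.smul_mem c ha, fun v => ?_⟩
    have h : (⟨(c • a).1, F.smul_mem c ha⟩ : F) = c • (⟨a.1, ha⟩ : F) := rfl
    have h2 : (c • a).2 v = c • (a.2 v) := rfl
    rw [h2, h, map_smul, LinearMap.smul_apply, Ha v]

theorem stmt6 {V : Type*} [AddCommGroup V] [Module ℝ V] [FiniteDimensional ℝ V]
    (F : Submodule ℝ V) (ω : F →ₗ[ℝ] F →ₗ[ℝ] ℝ)
    (hskew : ∀ u v : F, ω u v = - ω v u) :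
    IsDirac (diracOfForm F ω) ∧
    (∀ u : V, (∃ α, (u, α) ∈ diracOfForm F ω) ↔ u ∈ F) ∧
    (∀ (u : V) (α : Module.Dual ℝ V) (h : u ∈ F), (u, α) ∈ diracOfForm F ω →
      ∀ v : F, α v = ω ⟨u, h⟩ v) := by
  have hmem : ∀ (u : V) (α : Module.Dual ℝ V) (h : u ∈ F),
      (∀ v : F, α v = ω ⟨u, h⟩ v) → (u, α) ∈ diracOfForm F ω := by
    intro u α h H
    exact ⟨h, H⟩
  have hmk : ∀ (u : V) (h : u ∈ F), ∃ α, (u, α) ∈ diracOfForm F ω := by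
    intro u h
    obtain ⟨g, hg⟩ := LinearMap.exists_extend (ω ⟨u, h⟩)
    refine ⟨g, h, fun v => ?_⟩
    have := congrArg (fun f => f v) hg
    simpa using this
  refine ⟨?_, fun u => ⟨fun ⟨α, hα⟩ => hα.1, fun h => hmk u h⟩,
    fun u α h hm v => hm.2 v⟩
  apply Set.eq_of_subset_of_subset
  · rintro ⟨u, α⟩ ⟨hu, Hu⟩ ⟨v, β⟩ ⟨hv, Hv⟩
    simp only [pairLR]
    have h1 : α v = ω ⟨u, hu⟩ ⟨v, hv⟩ := Hu ⟨v, hv⟩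
    have h2 : β u = ω ⟨v, hv⟩ ⟨u, hu⟩ := Hv ⟨u, hu⟩
    rw [h1, h2, hskew]
    ring
  · rintro ⟨u, α⟩ horth
    have hu : u ∈ F := by
      by_contra hu
      -- find β vanishing on F with β u ≠ 0
      have hq : (Submodule.mkQ F u) ≠ 0 := by
        simpa [Submodule.Quotient.mk_eq_zero] using hu
      obtain ⟨φ, hφ⟩ : ∃ φ : Module.Dual ℝ (V ⧸ F), φ (Submodule.mkQ F u) ≠ 0 := by
        by_contra hall
        push_neg at hall
        exact hq ((Module.forall_dual_apply_eq_zero_iff ℝ _).mp hall)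
      have hD : ((0 : V), φ ∘ₗ Submodule.mkQ F) ∈ diracOfForm F ω := by
        refine ⟨F.zero_mem, fun v => ?_⟩
        have hv0 : Submodule.mkQ F (v : V) = 0 := by
          simp [Submodule.Quotient.mk_eq_zero]
        have : (⟨(0 : V), F.zero_mem⟩ : F) = 0 := rfl
        simp [this, hv0]
      have := horth _ hD
      simp only [pairLR, map_zero, add_zero, LinearMap.comp_apply] at this
      exact hφ (by linarith)
    refine ⟨hu, fun v => ?_⟩
    obtain ⟨g, hg⟩ := LinearMap.exists_extend (ω v)
    have hD : ((v : V), g) ∈ diracOfForm F ω := by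
      refine ⟨v.2, fun w => ?_⟩
      have := congrArg (fun f => f w) hg
      simpa using this
    have hp := horth _ hD
    have hgu : g u = ω v ⟨u, hu⟩ := by
      have := congrArg (fun f => f (⟨u, hu⟩ : F)) hg
      simpa using this
    simp only [pairLR, hgu] at hp
    have : α v = - ω v ⟨u, hu⟩ := by linarith
    rw [this, ← hskew]
end

section
/- A subspace Σ ⊆ V ⊕ V* is coisotropic if and only if it contains some linear Dirac structure on V. -/
open Module

section aux

variable {V : Type*} [AddCommGroup V] [Module ℝ V]

/-- The canonical pairing as a bilinear form. -/
noncomputable def pairB : LinearMap.BilinForm ℝ (V × Module.Dual ℝ V) :=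
  LinearMap.mk₂ ℝ (fun x y => x.2 y.1 + y.2 x.1)
    (by intro x x' y; simp; ring)
    (by intro a x y; simp; ring)
    (by intro x y y'; simp; ring)
    (by intro a x y; simp; ring)

lemma pairB_apply (x y : V × Module.Dual ℝ V) : pairB x y = x.2 y.1 + y.2 x.1 := rfl

lemma pairB_symm (x y : V × Module.Dual ℝ V) : pairB x y = pairB y x := by
  simp [pairB_apply]; ring

lemma pairB_refl : (pairB (V := V)).IsRefl := by
  intro x y h; rw [← pairB_symm]; exact h

lemma pairB_nondeg [FiniteDimensional ℝ V] : (pairB (V := V)).Nondegenerate := by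
  refine (LinearMap.IsRefl.nondegenerate_iff_separatingLeft (B := pairB (V := V)) (fun x y h => pairB_refl x y h)).mpr ?_
  intro x h
  have h1 : x.2 = 0 := by
    ext w
    simpa [pairB_apply] using h (w, 0)
  have h2 : x.1 = 0 := by
    rw [← Module.forall_dual_apply_eq_zero_iff ℝ x.1]
    intro φ
    simpa [pairB_apply] using h (0, φ)
  exact Prod.ext h2 h1

lemma orthSet_eq (S : Submodule ℝ (V × Module.Dual ℝ V)) :
    orthSet S = (pairB.orthogonal S : Set (V × Module.Dual ℝ V)) := by
  ext x
  simp only [orthSet, Set.mem_setOf_eq, SetLike.mem_coe,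
    LinearMap.BilinForm.mem_orthogonal_iff]
  constructor
  · intro h y hy
    have := h y hy
    rw [← pairB_symm]
    exact this
  · intro h y hy
    have := h y hy
    rw [← pairB_symm] at this
    exact this

lemma orthogonal_sup (A C : Submodule ℝ (V × Module.Dual ℝ V)) :
    pairB.orthogonal (A ⊔ C) = pairB.orthogonal A ⊓ pairB.orthogonal C := by
  refine le_antisymm (le_inf (pairB.orthogonal_le le_sup_left)
    (pairB.orthogonal_le le_sup_right)) ?_
  rintro x ⟨hA, hC⟩
  rw [LinearMap.BilinForm.mem_orthogonal_iff]
  intro y hy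
  obtain ⟨a, ha, c, hc, rfl⟩ := Submodule.mem_sup.mp hy
  have h1 : pairB a x = 0 := hA a ha
  have h2 : pairB c x = 0 := hC c hc
  simp [LinearMap.BilinForm.IsOrtho, map_add, h1, h2]

end aux

theorem stmt13 {V : Type*} [AddCommGroup V] [Module ℝ V] [FiniteDimensional ℝ V]
    (S : Submodule ℝ (V × Module.Dual ℝ V)) :
    orthSet S ⊆ (S : Set (V × Module.Dual ℝ V)) ↔
      ∃ D : Submodule ℝ (V × Module.Dual ℝ V), IsDirac D ∧ D ≤ S := by
  constructor
  · intro hco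
    -- the Lagrangian L = V × 0
    set L : Submodule ℝ (V × Module.Dual ℝ V) := Submodule.prod ⊤ ⊥ with hLdef
    have hLmem : ∀ x : V × Module.Dual ℝ V, x ∈ L ↔ x.2 = 0 := by
      intro x; simp [hLdef, Submodule.mem_prod]
    have hLorth : pairB.orthogonal L = L := by
      ext x
      rw [LinearMap.BilinForm.mem_orthogonal_iff, hLmem]
      constructor
      · intro h
        ext w
        have := h (w, 0) (by rw [hLmem])
        simpa [LinearMap.BilinForm.IsOrtho, pairB_apply] using this
      · intro h y hy
        rw [hLmem] at hy
        simp [LinearMap.BilinForm.IsOrtho, pairB_apply, h, hy]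
    set K : Submodule ℝ (V × Module.Dual ℝ V) := pairB.orthogonal S with hKdef
    have hKS : K ≤ S := by
      intro x hx
      apply hco
      rw [orthSet_eq]
      exact hx
    set D : Submodule ℝ (V × Module.Dual ℝ V) := K ⊔ (L ⊓ S) with hDdef
    have hDS : D ≤ S := sup_le hKS inf_le_right
    -- D is isotropic
    have hiso : D ≤ pairB.orthogonal D := by
      intro x hx
      rw [LinearMap.BilinForm.mem_orthogonal_iff]
      intro y hy
      obtain ⟨a, ha, b, hb, rfl⟩ := Submodule.mem_sup.mp hx
      obtain ⟨a', ha', b', hb', rfl⟩ := Submodule.mem_sup.mp hy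
      have hab : ∀ u v : V × Module.Dual ℝ V, u ∈ K → v ∈ S → pairB u v = 0 := by
        intro u v hu hv
        exact pairB_refl v u (hu v hv)
      have h1 : pairB a' a = 0 := hab a' a ha' (hKS ha)
      have h2 : pairB a' b = 0 := hab a' b ha' hb.2
      have h3 : pairB b' a = pairB a b' := pairB_symm b' a
      have h4 : pairB a b' = 0 := hab a b' ha hb'.2
      have h5 : pairB b' b = 0 := by
        have hb2 : b.2 = 0 := (hLmem b).mp hb.1
        have hb'2 : b'.2 = 0 := (hLmem b').mp hb'.1
        simp [pairB_apply, hb2, hb'2]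
      have : pairB (a' + b') (a + b) =
          pairB a' a + pairB a' b + pairB b' a + pairB b' b := by
        simp [map_add]; ring
      rw [this, h1, h2, h3, h4, h5]
      simp
    -- dimension count
    have hfin : finrank ℝ D = finrank ℝ (pairB.orthogonal D) := by
      have hN : finrank ℝ (V × Module.Dual ℝ V) = 2 * finrank ℝ V := by
        rw [Module.finrank_prod, Subspace.dual_finrank_eq]; ring
      have hL : finrank ℝ L = finrank ℝ V := by
        have heq : L = Submodule.fst ℝ V (Module.Dual ℝ V) := by
          ext x
          rw [hLmem]
          simp [Submodule.fst, Submodule.mem_comap]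
        rw [heq, (Submodule.fstEquiv ℝ V (Module.Dual ℝ V)).finrank_eq]
      have hK : finrank ℝ K + finrank ℝ S = finrank ℝ (V × Module.Dual ℝ V) := by
        have := LinearMap.BilinForm.finrank_orthogonal pairB_nondeg S
        rw [← hKdef] at this
        have hle : finrank ℝ S ≤ finrank ℝ (V × Module.Dual ℝ V) := Submodule.finrank_le S
        omega
      have hDeq : finrank ℝ D + finrank ℝ (K ⊓ (L ⊓ S) : Submodule ℝ _)
          = finrank ℝ K + finrank ℝ (L ⊓ S : Submodule ℝ _) :=
        Submodule.finrank_sup_add_finrank_inf_eq K (L ⊓ S)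
      have hKLS : K ⊓ (L ⊓ S) = K ⊓ L := by
        rw [inf_comm L S, ← inf_assoc, inf_eq_left.mpr hKS]
      have hLS : finrank ℝ (L ⊔ S : Submodule ℝ _) + finrank ℝ (L ⊓ S : Submodule ℝ _)
          = finrank ℝ L + finrank ℝ S :=
        Submodule.finrank_sup_add_finrank_inf_eq L S
      have hLSorth : finrank ℝ (L ⊔ S : Submodule ℝ _)
          + finrank ℝ (K ⊓ L : Submodule ℝ _) = finrank ℝ (V × Module.Dual ℝ V) := by
        have := LinearMap.BilinForm.finrank_orthogonal pairB_nondeg (L ⊔ S)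
        rw [orthogonal_sup, hLorth, ← hKdef, inf_comm] at this
        have hle : finrank ℝ (L ⊔ S : Submodule ℝ _)
            ≤ finrank ℝ (V × Module.Dual ℝ V) := Submodule.finrank_le _
        omega
      have hDo := LinearMap.BilinForm.finrank_orthogonal pairB_nondeg D
      have hle : finrank ℝ D ≤ finrank ℝ (V × Module.Dual ℝ V) := Submodule.finrank_le D
      rw [hKLS] at hDeq
      omega
    have hDir : pairB.orthogonal D = D :=
      (Submodule.eq_of_le_of_finrank_le hiso hfin.ge).symm
    refine ⟨D, ?_, hDS⟩
    rw [IsDirac, orthSet_eq, hDir]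
  · rintro ⟨D, hD, hDS⟩ x hx
    have : x ∈ orthSet D := by
      intro y hy
      exact hx y (hDS hy)
    rw [IsDirac] at hD
    rw [← hD] at this
    exact hDS this
end
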